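/- For all κ ∈ [0,1]: γ/(1 + (r°/2)(1+ψ(κ°)) + (r°/2)·(1+ψ(κ°))/(1+ψ(κ))) > γ/(1 + r° + r°ψ(κ°)) = α_TEAM, where γ > 0, r° > 0, and ψ: [0,1] → (0,1] is strictly increasing with ψ(0) > 0. Consequently, since the symmetric objective payoff V is strictly decreasing above α_TEAM and the left-hand side is strictly increasing in κ, the equilibrium fitness under perfectly assortative matching is strictly decreasing in κ. -/
import Mathlib


/-- the assortative-matching equilibrium coefficient α_{gg}(κ) exceeds the
team solution α_TEAM = γ/(1+r°+r°ψ(κ°)) for every κ ∈ [0,1]; consequently, since the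
symmetric objective payoff V is strictly decreasing above α_TEAM and α_{gg}(κ) is
strictly increasing in κ, equilibrium fitness is strictly decreasing in κ. -/
theorem assortative_fitness_decreasing (Es2 γ r : ℝ) (ψ : ℝ → ℝ)
    (hE : 0 < Es2) (hγ : 0 < γ) (hr : 0 < r)
    (hmono : StrictMonoOn ψ (Set.Icc 0 1))
    (hrange : ∀ κ ∈ Set.Icc (0:ℝ) 1, ψ κ ∈ Set.Ioc (0:ℝ) 1)
    (κ0 : ℝ) (hκ0 : κ0 ∈ Set.Icc (0:ℝ) 1)
    (V : ℝ → ℝ)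
    (hV : ∀ α, V α = Es2 * (α * γ - (1/2) * (r + r * ψ κ0 + 1) * α^2)) :
    (∀ κ ∈ Set.Icc (0:ℝ) 1,
      γ / (1 + r/2 * (1 + ψ κ0) + r/2 * ((1 + ψ κ0) / (1 + ψ κ)))
        > γ / (1 + r + r * ψ κ0)) ∧
    StrictAntiOn
      (fun κ => V (γ / (1 + r/2 * (1 + ψ κ0) + r/2 * ((1 + ψ κ0) / (1 + ψ κ)))))
      (Set.Icc 0 1) := by
  obtain ⟨hψ0pos, hψ0le⟩ := hrange κ0 hκ0
  have key : ∀ κ ∈ Set.Icc (0:ℝ) 1,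
      0 < 1 + r/2 * (1 + ψ κ0) + r/2 * ((1 + ψ κ0) / (1 + ψ κ)) ∧
      1 + r/2 * (1 + ψ κ0) + r/2 * ((1 + ψ κ0) / (1 + ψ κ)) < 1 + r + r * ψ κ0 := by
    intro κ hκ
    obtain ⟨hp, hle⟩ := hrange κ hκ
    have h1 : (0:ℝ) < 1 + ψ κ := by linarith
    have hfrac : (1 + ψ κ0) / (1 + ψ κ) < 1 + ψ κ0 := by
      rw [div_lt_iff₀ h1]; nlinarith
    have hfracpos : 0 < (1 + ψ κ0) / (1 + ψ κ) := by positivity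
    constructor
    · nlinarith
    · nlinarith
  have hfirst : ∀ κ ∈ Set.Icc (0:ℝ) 1,
      γ / (1 + r/2 * (1 + ψ κ0) + r/2 * ((1 + ψ κ0) / (1 + ψ κ)))
        > γ / (1 + r + r * ψ κ0) := by
    intro κ hκ
    obtain ⟨hpos, hlt⟩ := key κ hκ
    exact div_lt_div_of_pos_left hγ hpos hlt
  refine ⟨hfirst, ?_⟩
  intro a ha b hb hab
  obtain ⟨hpa, hlta⟩ := key a ha
  obtain ⟨hpb, hltb⟩ := key b hb
  obtain ⟨hpψa, _⟩ := hrange a ha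
  obtain ⟨hpψb, _⟩ := hrange b hb
  have hψab : ψ a < ψ b := hmono ha hb hab
  -- denominators decrease
  have hfracab : (1 + ψ κ0) / (1 + ψ b) < (1 + ψ κ0) / (1 + ψ a) :=
    div_lt_div_of_pos_left (by linarith) (by linarith) (by linarith)
  have hDab : 1 + r/2 * (1 + ψ κ0) + r/2 * ((1 + ψ κ0) / (1 + ψ b))
      < 1 + r/2 * (1 + ψ κ0) + r/2 * ((1 + ψ κ0) / (1 + ψ a)) := by nlinarith
  set x := γ / (1 + r/2 * (1 + ψ κ0) + r/2 * ((1 + ψ κ0) / (1 + ψ b))) with hx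
  set y := γ / (1 + r/2 * (1 + ψ κ0) + r/2 * ((1 + ψ κ0) / (1 + ψ a))) with hy
  have hxy : y < x := div_lt_div_of_pos_left hγ hpb hDab
  have hyT : γ / (1 + r + r * ψ κ0) < y := hfirst a ha
  set c := r + r * ψ κ0 + 1 with hc
  have hcpos : 0 < c := by positivity
  have hcy : γ < c * y := by
    have h1 : γ / c < y := by
      have : (1 + r + r * ψ κ0) = c := by ring
      rwa [this] at hyT
    calc γ = c * (γ / c) := by field_simp
    _ < c * y := by exact mul_lt_mul_of_pos_left h1 hcpos
  have h2 : 0 < c/2 * (x + y) - γ := by nlinarith [mul_pos hcpos (sub_pos.2 hxy)]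
  simp only [hV]
  nlinarith [mul_pos hE (mul_pos (sub_pos.2 hxy) h2)]
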